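/- Let P be the transition matrix of the simple random walk on a finite connected vertex-transitive d-regular graph G with second-largest eigenvalue λ < 1. Then for every t ≥ 0, E[dist(X_0, X_t)²] ≥ (1/d)(1 + λ + λ² + ⋯ + λ^{t−1}). In particular, E[dist(X_0, X_t)²] ≥ t/(2d) for t ≤ (1−λ)^{−1}. -/

import Mathlib

open Finset

namespace Stmt8Aux

variable {V : Type*} [Fintype V] [DecidableEq V]

noncomputable instance isoFintype (G : SimpleGraph V) : Fintype (G ≃g G) :=
  Fintype.ofInjective (fun φ : G ≃g G => φ.toEquiv)
    (fun a b h => RelIso.ext fun x => congrArg (fun e : V ≃ V => e x) h)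

lemma row_one {M : Matrix V V ℝ} (h : ∀ x, ∑ y, M x y = 1) (t : ℕ) (x : V) :
    ∑ y, (M ^ t) x y = 1 := by
  induction t with
  | zero => simp [Matrix.one_apply]
  | succ t ih =>
    rw [pow_succ]
    simp only [Matrix.mul_apply]
    rw [Finset.sum_comm]
    simp_rw [← Finset.mul_sum, h, mul_one]
    exact ih

lemma pow_entry_nonneg {M : Matrix V V ℝ} (h : ∀ x y, 0 ≤ M x y) (t : ℕ) (x y : V) :
    0 ≤ (M ^ t) x y := by
  induction t generalizing x y with
  | zero =>
    rw [pow_zero, Matrix.one_apply]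
    split <;> norm_num
  | succ t ih =>
    rw [pow_succ, Matrix.mul_apply]
    exact Finset.sum_nonneg fun z _ => mul_nonneg (ih x z) (h z y)

lemma pow_eigen {M : Matrix V V ℝ} {v : V → ℝ} {a : ℝ} (h : M.mulVec v = a • v) (t : ℕ) :
    (M ^ t).mulVec v = a ^ t • v := by
  induction t with
  | zero => simp
  | succ t ih =>
    rw [pow_succ', ← Matrix.mulVec_mulVec, ih, Matrix.mulVec_smul, h, smul_smul, ← pow_succ]

lemma quad_id {M : Matrix V V ℝ} {f : V → ℝ} {c : ℝ}
    (hrow : ∀ x, ∑ y, M x y = 1) (hcol : ∀ y, ∑ x, M x y = 1)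
    (hev : M.mulVec f = c • f) :
    ∑ x, ∑ y, M x y * (f x - f y) ^ 2 = 2 * (1 - c) * ∑ x, f x ^ 2 := by
  have h1 : ∀ x, ∑ y, M x y * f y = c * f x := by
    intro x
    have := congrFun hev x
    simpa [Matrix.mulVec, dotProduct] using this
  have expand : ∀ x y : V, M x y * (f x - f y) ^ 2
      = M x y * f x ^ 2 + M x y * f y ^ 2 - 2 * (f x * (M x y * f y)) := by
    intros; ring
  simp_rw [expand, Finset.sum_sub_distrib, Finset.sum_add_distrib]
  have hA : ∀ x : V, ∑ y, M x y * f x ^ 2 = f x ^ 2 := by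
    intro x; rw [← Finset.sum_mul, hrow, one_mul]
  have hB : ∑ x : V, ∑ y, M x y * f y ^ 2 = ∑ y : V, f y ^ 2 := by
    rw [Finset.sum_comm]
    refine Finset.sum_congr rfl fun y _ => ?_
    rw [← Finset.sum_mul, hcol, one_mul]
  have hC : ∀ x : V, ∑ y, 2 * (f x * (M x y * f y)) = 2 * c * f x ^ 2 := by
    intro x
    rw [← Finset.mul_sum, ← Finset.mul_sum, h1 x]
    ring
  simp_rw [hA, hB, hC]
  rw [← Finset.mul_sum]
  ring

lemma pow_equiv {G : SimpleGraph V} {P : Matrix V V ℝ}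
    (hPe : ∀ (g : G ≃g G) (x y : V), P (g x) (g y) = P x y)
    (g : G ≃g G) (t : ℕ) (x y : V) : (P ^ t) (g x) (g y) = (P ^ t) x y := by
  induction t generalizing x y with
  | zero =>
    rw [pow_zero, Matrix.one_apply, Matrix.one_apply]
    simp [EmbeddingLike.apply_eq_iff_eq]
  | succ t ih =>
    rw [pow_succ, Matrix.mul_apply, Matrix.mul_apply]
    refine (Fintype.sum_equiv g.toEquiv _ _ fun z => ?_).symm
    simp only [RelIso.coe_fn_toEquiv]
    rw [ih x z, hPe g z y]

end Stmt8Aux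
theorem stmt8 {V : Type*} [Fintype V] [DecidableEq V]
    (G : SimpleGraph V) [DecidableRel G.Adj]
    (hconn : G.Connected)
    (htrans : ∀ u v : V, ∃ φ : G ≃g G, φ u = v)
    (d : ℕ) (hd : 0 < d) (hreg : ∀ v : V, G.degree v = d)
    (P : Matrix V V ℝ)
    (hP : ∀ x y : V, P x y = if G.Adj x y then (d : ℝ)⁻¹ else 0)
    (lam : ℝ) (hlam1 : lam < 1)
    (hev : ∃ ψ : V → ℝ, ψ ≠ 0 ∧ P.mulVec ψ = lam • ψ)
    (hmax : ∀ μ : ℝ, μ ≠ 1 → (∃ ψ : V → ℝ, ψ ≠ 0 ∧ P.mulVec ψ = μ • ψ) → μ ≤ lam)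
    (x₀ : V) :
    (∀ t : ℕ,
      (∑ j ∈ Finset.range t, lam ^ j) / (d : ℝ)
        ≤ ∑ y : V, (P ^ t) x₀ y * (G.dist x₀ y : ℝ) ^ 2) ∧
    ∀ t : ℕ, (t : ℝ) ≤ (1 - lam)⁻¹ →
      (t : ℝ) / (2 * d) ≤ ∑ y : V, (P ^ t) x₀ y * (G.dist x₀ y : ℝ) ^ 2 := by
  classical
  obtain ⟨ψ, hψ0, hψev⟩ := hev
  clear hmax
  have hd' : (0:ℝ) < d := by exact_mod_cast hd
  have hPnn : ∀ x y : V, 0 ≤ P x y := by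
    intro x y; rw [hP]; split <;> positivity
  have hProw : ∀ x : V, ∑ y, P x y = 1 := by
    intro x
    have hdeg : (G.neighborFinset x).card = d := by rw [← hreg x]; rfl
    simp_rw [hP]
    rw [Finset.sum_ite, Finset.sum_const, Finset.sum_const_zero, add_zero,
      ← SimpleGraph.neighborFinset_eq_filter, hdeg, nsmul_eq_mul]
    field_simp
  have hPcol : ∀ y : V, ∑ x, P x y = 1 := by
    intro y
    rw [show ∑ x, P x y = ∑ x, P y x from Finset.sum_congr rfl fun x _ => by
      rw [hP, hP]; simp [SimpleGraph.adj_comm]]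
    exact hProw y
  have hrowt : ∀ (t : ℕ) (x : V), ∑ y, (P ^ t) x y = 1 := fun t x => Stmt8Aux.row_one hProw t x
  have hcolt : ∀ (t : ℕ) (y : V), ∑ x, (P ^ t) x y = 1 := by
    intro t y
    have hsym : Matrix.transpose (P ^ t) = P ^ t := by
      rw [Matrix.transpose_pow]
      congr 1
      ext a b
      rw [Matrix.transpose_apply, hP, hP]
      simp [SimpleGraph.adj_comm]
    calc ∑ x, (P ^ t) x y = ∑ x, Matrix.transpose (P ^ t) y x := by
          refine Finset.sum_congr rfl fun x _ => ?_
          rw [Matrix.transpose_apply]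
      _ = ∑ x, (P ^ t) y x := by rw [hsym]
      _ = 1 := hrowt t y
  have hpnn : ∀ (t : ℕ) (x y : V), 0 ≤ (P ^ t) x y := fun t => Stmt8Aux.pow_entry_nonneg hPnn t
  have hPe : ∀ (g : G ≃g G) (x y : V), P (g x) (g y) = P x y := by
    intro g x y; rw [hP, hP]; simp [g.map_adj_iff]
  have hpe : ∀ (g : G ≃g G) (t : ℕ) (x y : V), (P ^ t) (g x) (g y) = (P ^ t) x y :=
    fun g t x y => Stmt8Aux.pow_equiv hPe g t x y
  have heig : ∀ g : G ≃g G, P.mulVec (fun x => ψ (g x)) = lam • (fun x => ψ (g x)) := by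
    intro g
    funext x
    have h1 : P.mulVec (fun z => ψ (g z)) x = ∑ y, P x y * ψ (g y) := by
      simp [Matrix.mulVec, dotProduct]
    have h2 : ∑ y, P x y * ψ (g y) = ∑ z, P (g x) z * ψ z := by
      refine Fintype.sum_equiv g.toEquiv _ _ fun y => ?_
      simp only [RelIso.coe_fn_toEquiv]
      rw [hPe g x y]
    have h3 : ∑ z, P (g x) z * ψ z = lam * ψ (g x) := by
      have := congrFun hψev (g x)
      simpa [Matrix.mulVec, dotProduct] using this
    simp only [Pi.smul_apply, smul_eq_mul]
    rw [h1, h2, h3]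
  have hpeig : ∀ (g : G ≃g G) (t : ℕ),
      (P ^ t).mulVec (fun x => ψ (g x)) = lam ^ t • (fun x => ψ (g x)) :=
    fun g t => Stmt8Aux.pow_eigen (heig g) t
  set N : ℝ := ∑ x, ψ x ^ 2 with hNdef
  clear_value N
  have hNg : ∀ g : G ≃g G, ∑ x, ψ (g x) ^ 2 = N := by
    intro g
    rw [hNdef]
    exact Fintype.sum_equiv g.toEquiv _ _ fun x => rfl
  have hNpos : 0 < N := by
    rw [hNdef]
    obtain ⟨x1, hx1⟩ := Function.ne_iff.mp hψ0
    exact Finset.sum_pos' (fun x _ => sq_nonneg _) ⟨x1, Finset.mem_univ _, by exact pow_pos (abs_pos.mpr hx1) 2 |>.trans_eq (by rw [sq_abs])⟩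
  set A : ℝ := (Fintype.card (G ≃g G) : ℝ) with hAdef
  clear_value A
  have hApos : 0 < A := by
    obtain ⟨φ0, -⟩ := htrans x₀ x₀
    have : Nonempty (G ≃g G) := ⟨φ0⟩
    have := Fintype.card_pos (α := G ≃g G)
    rw [hAdef]
    exact_mod_cast this
  set n : ℝ := (Fintype.card V : ℝ) with hndef
  clear_value n
  have hnpos : 0 < n := by
    have : Nonempty V := ⟨x₀⟩
    have := Fintype.card_pos (α := V)
    rw [hndef]
    exact_mod_cast this
  set Q : V → V → ℝ := fun x y => ∑ g : G ≃g G, (ψ (g x) - ψ (g y)) ^ 2 with hQdef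
  clear_value Q
  have hQnn : ∀ x y, 0 ≤ Q x y := by
    intro x y
    rw [hQdef]
    exact Finset.sum_nonneg fun g _ => sq_nonneg _
  have hQe : ∀ (h : G ≃g G) (x y : V), Q (h x) (h y) = Q x y := by
    intro h x y
    simp only [hQdef]
    refine Fintype.sum_equiv
      ⟨fun g => h.trans g, fun g => h.symm.trans g,
        fun g => RelIso.ext fun z => by simp,
        fun g => RelIso.ext fun z => by simp⟩ _ _ fun g => ?_
    simp
  set T : ℕ → V → ℝ := fun t x => ∑ y, (P ^ t) x y * Q x y with hTdef
  clear_value T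
  have hTe : ∀ (t : ℕ) (h : G ≃g G) (x : V), T t (h x) = T t x := by
    intro t h x
    simp only [hTdef]
    refine (Fintype.sum_equiv h.toEquiv _ _ fun z => ?_).symm
    simp only [RelIso.coe_fn_toEquiv]
    rw [hpe h t x z, hQe h x z]
  have hTconst : ∀ (t : ℕ) (x : V), T t x = T t x₀ := by
    intro t x
    obtain ⟨h, hh⟩ := htrans x₀ x
    rw [← hh, hTe]
  have hTsum : ∀ t : ℕ, n * T t x₀ = A * (2 * (1 - lam ^ t) * N) := by
    intro t
    have h1 : ∑ x, T t x = n * T t x₀ := by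
      rw [Finset.sum_congr rfl fun x _ => hTconst t x, Finset.sum_const, Finset.card_univ,
        nsmul_eq_mul, hndef]
    rw [← h1]
    have h2 : ∀ x : V, T t x = ∑ g : G ≃g G, ∑ y, (P ^ t) x y * (ψ (g x) - ψ (g y)) ^ 2 := by
      intro x
      simp only [hTdef, hQdef, Finset.mul_sum]
      rw [Finset.sum_comm]
    calc ∑ x, T t x
        = ∑ g : G ≃g G, ∑ x, ∑ y, (P ^ t) x y * (ψ (g x) - ψ (g y)) ^ 2 := by
          rw [Finset.sum_congr rfl fun x _ => h2 x, Finset.sum_comm]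
      _ = ∑ _g : G ≃g G, 2 * (1 - lam ^ t) * N := by
          refine Finset.sum_congr rfl fun g _ => ?_
          rw [Stmt8Aux.quad_id (hrowt t) (hcolt t) (hpeig g t), hNg g]
      _ = A * (2 * (1 - lam ^ t) * N) := by
          rw [Finset.sum_const, Finset.card_univ, nsmul_eq_mul, hAdef]
  set c : ℝ := T 1 x₀ with hcdef
  clear_value c
  have hcval : n * c = A * (2 * (1 - lam) * N) := by rw [hcdef]; simpa using hTsum 1
  have hcpos : 0 < c := by
    have h1 : 0 < n * c := by
      rw [hcval]
      exact mul_pos hApos (mul_pos (by linarith) hNpos)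
    have h2 : c = (n * c) / n := by field_simp
    rw [h2]
    exact div_pos h1 hnpos
  have hedge : ∀ x y : V, G.Adj x y → Q x y ≤ d * c := by
    intro x y hxy
    have h1 : P x y * Q x y ≤ T 1 x := by
      have ht1 : T 1 x = ∑ z, P x z * Q x z := by simp [hTdef, pow_one]
      rw [ht1]
      exact Finset.single_le_sum (fun z _ => mul_nonneg (hPnn x z) (hQnn x z)) (Finset.mem_univ y)
    rw [hP x y, if_pos hxy, hTconst 1 x, ← hcdef] at h1
    calc Q x y = (d:ℝ) * ((d:ℝ)⁻¹ * Q x y) := by field_simp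
      _ ≤ (d:ℝ) * c := mul_le_mul_of_nonneg_left h1 hd'.le
  have hdist : ∀ y : V, Q x₀ y ≤ (G.dist x₀ y : ℝ) ^ 2 * ((d:ℝ) * c) := by
    intro y
    obtain ⟨p, hp⟩ := hconn.exists_walk_length_eq_dist x₀ y
    rw [← hp]
    have hstep : ∀ g : G ≃g G, ψ (g x₀) - ψ (g y)
        = ∑ i ∈ Finset.range p.length, (ψ (g (p.getVert i)) - ψ (g (p.getVert (i + 1)))) := by
      intro g
      rw [Finset.sum_range_sub' (fun i => ψ (g (p.getVert i))) p.length]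
      rw [SimpleGraph.Walk.getVert_zero, SimpleGraph.Walk.getVert_length]
    have h1 : Q x₀ y ≤ (p.length : ℝ)
        * ∑ i ∈ Finset.range p.length, Q (p.getVert i) (p.getVert (i + 1)) := by
      have hle : ∀ g : G ≃g G, (ψ (g x₀) - ψ (g y)) ^ 2
          ≤ (p.length : ℝ) * ∑ i ∈ Finset.range p.length,
            (ψ (g (p.getVert i)) - ψ (g (p.getVert (i + 1)))) ^ 2 := by
        intro g
        rw [hstep g]
        simpa using sq_sum_le_card_mul_sum_sq (s := Finset.range p.length)
          (f := fun i => ψ (g (p.getVert i)) - ψ (g (p.getVert (i + 1))))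
      calc Q x₀ y = ∑ g : G ≃g G, (ψ (g x₀) - ψ (g y)) ^ 2 := by rw [hQdef]
        _ ≤ ∑ g : G ≃g G, (p.length : ℝ) * ∑ i ∈ Finset.range p.length,
            (ψ (g (p.getVert i)) - ψ (g (p.getVert (i + 1)))) ^ 2 :=
            Finset.sum_le_sum fun g _ => hle g
        _ = (p.length : ℝ) * ∑ i ∈ Finset.range p.length, Q (p.getVert i) (p.getVert (i + 1)) := by
            simp only [hQdef]
            rw [← Finset.mul_sum, Finset.sum_comm]
    have h2 : ∑ i ∈ Finset.range p.length, Q (p.getVert i) (p.getVert (i + 1))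
        ≤ (p.length : ℝ) * ((d:ℝ) * c) := by
      calc ∑ i ∈ Finset.range p.length, Q (p.getVert i) (p.getVert (i + 1))
          ≤ ∑ _i ∈ Finset.range p.length, ((d:ℝ) * c) :=
            Finset.sum_le_sum fun i hi =>
              hedge _ _ (p.adj_getVert_succ (Finset.mem_range.mp hi))
        _ = (p.length : ℝ) * ((d:ℝ) * c) := by
            rw [Finset.sum_const, Finset.card_range, nsmul_eq_mul]
    calc Q x₀ y ≤ (p.length : ℝ) * ((p.length : ℝ) * ((d:ℝ) * c)) :=
          h1.trans (mul_le_mul_of_nonneg_left h2 (by positivity))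
      _ = (p.length : ℝ) ^ 2 * ((d:ℝ) * c) := by ring
  have part1 : ∀ t : ℕ, (∑ j ∈ Finset.range t, lam ^ j) / (d : ℝ)
      ≤ ∑ y : V, (P ^ t) x₀ y * (G.dist x₀ y : ℝ) ^ 2 := by
    intro t
    set come := ∑ y : V, (P ^ t) x₀ y * (G.dist x₀ y : ℝ) ^ 2 with hcome
    clear_value come
    have h1 : T t x₀ ≤ ((d:ℝ) * c) * come := by
      calc T t x₀ ≤ ∑ y, (P ^ t) x₀ y * ((G.dist x₀ y : ℝ) ^ 2 * ((d:ℝ) * c)) := by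
            simp only [hTdef]
            exact Finset.sum_le_sum fun y _ =>
              mul_le_mul_of_nonneg_left (hdist y) (hpnn t x₀ y)
        _ = come * ((d:ℝ) * c) := by
            rw [hcome, Finset.sum_mul]
            exact Finset.sum_congr rfl fun y _ => by ring
        _ = ((d:ℝ) * c) * come := mul_comm _ _
    have hgm : (∑ j ∈ Finset.range t, lam ^ j) * (1 - lam) = 1 - lam ^ t := by
      linear_combination (-1 : ℝ) * geom_sum_mul lam t
    have hTc : T t x₀ * (1 - lam) = c * (1 - lam ^ t) := by
      have h3 : n * (T t x₀ * (1 - lam)) = n * (c * (1 - lam ^ t)) := by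
        calc n * (T t x₀ * (1 - lam)) = (n * T t x₀) * (1 - lam) := by ring
          _ = (A * (2 * (1 - lam ^ t) * N)) * (1 - lam) := by rw [hTsum t]
          _ = (A * (2 * (1 - lam) * N)) * (1 - lam ^ t) := by ring
          _ = (n * c) * (1 - lam ^ t) := by rw [hcval]
          _ = n * (c * (1 - lam ^ t)) := by ring
      exact mul_left_cancel₀ (ne_of_gt hnpos) h3
    have hl : (0:ℝ) < 1 - lam := by linarith
    rw [div_le_iff₀ hd']
    have key : (∑ j ∈ Finset.range t, lam ^ j) * ((1 - lam) * c)
        ≤ (come * d) * ((1 - lam) * c) := by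
      have l1 : (∑ j ∈ Finset.range t, lam ^ j) * ((1 - lam) * c) = T t x₀ * (1 - lam) := by
        calc (∑ j ∈ Finset.range t, lam ^ j) * ((1 - lam) * c)
            = ((∑ j ∈ Finset.range t, lam ^ j) * (1 - lam)) * c := by ring
          _ = (1 - lam ^ t) * c := by rw [hgm]
          _ = T t x₀ * (1 - lam) := by rw [hTc]; ring
      rw [l1]
      calc T t x₀ * (1 - lam) ≤ (((d:ℝ) * c) * come) * (1 - lam) :=
            mul_le_mul_of_nonneg_right h1 hl.le
        _ = (come * d) * ((1 - lam) * c) := by ring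
    exact le_of_mul_le_mul_right key (mul_pos hl hcpos)
  refine ⟨part1, ?_⟩
  intro t ht
  rcases Nat.eq_zero_or_pos t with h0 | hpos
  · subst h0
    simp only [Nat.cast_zero, zero_div]
    exact Finset.sum_nonneg fun y _ => mul_nonneg (hpnn 0 x₀ y) (sq_nonneg _)
  · have hl : (0:ℝ) < 1 - lam := by linarith
    have htR : (1:ℝ) ≤ (t:ℝ) := by exact_mod_cast hpos
    have ht' : (t:ℝ) * (1 - lam) ≤ 1 := by
      have h := mul_le_mul_of_nonneg_right ht hl.le
      rwa [inv_mul_cancel₀ (ne_of_gt hl)] at h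
    have hb : ∀ j : ℕ, 1 + (j:ℝ) * (lam - 1) ≤ lam ^ j := by
      intro j
      have hlam0 : 0 ≤ lam := by nlinarith
      have h := one_add_mul_le_pow (a := lam - 1) (by linarith) j
      simpa using h
    have hgauss : (∑ j ∈ Finset.range t, (j:ℝ)) * 2 = (t:ℝ) * ((t:ℝ) - 1) := by
      have h := Finset.sum_range_id_mul_two t
      have h2 : (((∑ i ∈ Finset.range t, i) * 2 : ℕ) : ℝ) = ((t * (t - 1) : ℕ) : ℝ) := by rw [h]
      push_cast [Nat.cast_sub (by omega : 1 ≤ t)] at h2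
      simpa using h2
    have hsum : (t:ℝ) / 2 ≤ ∑ j ∈ Finset.range t, lam ^ j := by
      have h1 : ∑ j ∈ Finset.range t, (1 + (j:ℝ) * (lam - 1))
          ≤ ∑ j ∈ Finset.range t, lam ^ j := Finset.sum_le_sum fun j _ => hb j
      have h2 : ∑ j ∈ Finset.range t, (1 + (j:ℝ) * (lam - 1))
          = (t:ℝ) + (lam - 1) * ∑ j ∈ Finset.range t, (j:ℝ) := by
        rw [Finset.sum_add_distrib, Finset.sum_const, Finset.card_range, nsmul_eq_mul, mul_one,
          Finset.mul_sum]
        congr 1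
        exact Finset.sum_congr rfl fun j _ => by ring
      nlinarith [mul_le_mul_of_nonneg_right ht' (by linarith : (0:ℝ) ≤ (t:ℝ) - 1)]
    calc (t:ℝ) / (2 * d) = ((t:ℝ) / 2) / d := by ring
      _ ≤ (∑ j ∈ Finset.range t, lam ^ j) / d := by gcongr
      _ ≤ ∑ y : V, (P ^ t) x₀ y * (G.dist x₀ y : ℝ) ^ 2 := part1 t
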